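/- arXiv:2410.13821 — 2 statements merged into one kernel-verified Lean document; each statement's English description precedes it below -/
import Mathlib

section
/- (Lyapunov property of the generalized Kuramoto model) Let x_i : R → R^N for i = 1,…,C satisfy ẋ_i = Ω x_i + Proj_{x_i}(c_i + ∑_j J_{ij} x_j) with ||x_i(t)|| = 1, where J_{ij} = J_{ji} ∈ R are symmetric scalar couplings, Ω is a skew-symmetric N×N matrix shared by all oscillators, and Ω c_i = 0 for each i. Then the energy E(x) = -(1/2) ∑_{i,j} J_{ij} ⟨x_i, x_j⟩ - ∑_i ⟨c_i, x_i⟩ is non-increasing along trajectories: dE/dt ≤ 0. -/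
open Matrix

open scoped RealInnerProductSpace

lemma euc_adj {N : ℕ} (A : Matrix (Fin N) (Fin N) ℝ) (u w : EuclideanSpace ℝ (Fin N)) :
    ⟪Matrix.toEuclideanLin A u, w⟫ = ⟪u, Matrix.toEuclideanLin Aᵀ w⟫ := by
  simp only [PiLp.inner_apply, RCLike.inner_apply, starRingEnd_apply, star_trivial,
    Matrix.toEuclideanLin_apply]
  simp [Matrix.mulVec, dotProduct, Finset.mul_sum, Finset.sum_mul, Matrix.transpose_apply]
  rw [Finset.sum_comm]
  exact Finset.sum_congr rfl fun i _ => Finset.sum_congr rfl fun j _ => by ring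

/-- Lyapunov property of the generalized Kuramoto model: under the symmetry
assumptions the energy is non-increasing along trajectories. -/
theorem stmt6 {C N : ℕ} (J : Matrix (Fin C) (Fin C) ℝ) (hJ : ∀ i j, J i j = J j i)
    (Ω : Matrix (Fin N) (Fin N) ℝ) (hΩ : Ωᵀ = -Ω)
    (c : Fin C → EuclideanSpace ℝ (Fin N))
    (hΩc : ∀ i, Matrix.toEuclideanLin Ω (c i) = 0)
    (x : Fin C → ℝ → EuclideanSpace ℝ (Fin N))
    (hnorm : ∀ i t, ‖x i t‖ = 1)
    (hode : ∀ i (t : ℝ), HasDerivAt (x i)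
      (Matrix.toEuclideanLin Ω (x i t) +
        ((c i + ∑ j, J i j • x j t) -
          ⟪c i + ∑ j, J i j • x j t, x i t⟫ • x i t)) t) :
    Antitone (fun t : ℝ =>
      -(1 / 2) * ∑ i, ∑ j, J i j * ⟪x i t, x j t⟫ - ∑ i, ⟪c i, x i t⟫) := by
  set y : Fin C → ℝ → EuclideanSpace ℝ (Fin N) := fun i t => c i + ∑ j, J i j • x j t with hy
  set v : Fin C → ℝ → EuclideanSpace ℝ (Fin N) := fun i t =>
    Matrix.toEuclideanLin Ω (x i t) + (y i t - ⟪y i t, x i t⟫ • x i t) with hv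
  have hode' : ∀ i t, HasDerivAt (x i) (v i t) t := hode
  apply antitone_of_hasDerivAt_nonpos
    (f' := fun t => -(1 / 2) * ∑ i, ∑ j, J i j * (⟪x i t, v j t⟫ + ⟪v i t, x j t⟫)
      - ∑ i, (⟪c i, v i t⟫ + ⟪(0 : EuclideanSpace ℝ (Fin N)), x i t⟫))
  · intro t
    apply HasDerivAt.sub
    · exact (HasDerivAt.fun_sum fun i _ => HasDerivAt.fun_sum fun j _ =>
        ((hode' i t).inner ℝ (hode' j t)).const_mul (J i j)).const_mul (-(1/2))
    · exact HasDerivAt.fun_sum fun i _ => (hasDerivAt_const t (c i)).inner ℝ (hode' i t)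
  · intro t
    simp only [inner_zero_left, add_zero]
    -- Step A: symmetrize the double sum
    have stepA : ∑ i, ∑ j, J i j * (⟪x i t, v j t⟫ + ⟪v i t, x j t⟫)
        = 2 * ∑ i, ∑ j, J i j * ⟪v i t, x j t⟫ := by
      have : ∑ i, ∑ j, J i j * ⟪x i t, v j t⟫ = ∑ i, ∑ j, J i j * ⟪v i t, x j t⟫ := by
        rw [Finset.sum_comm]
        exact Finset.sum_congr rfl fun i _ => Finset.sum_congr rfl fun j _ => by
          rw [hJ j i, real_inner_comm]
      simp only [mul_add, Finset.sum_add_distrib, this]; ring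
    -- Step B: rewrite as -∑ ⟪v i, y i⟫
    have stepB : (-(1 / 2) * ∑ i, ∑ j, J i j * (⟪x i t, v j t⟫ + ⟪v i t, x j t⟫)
        - ∑ i, ⟪c i, v i t⟫) = -∑ i, ⟪v i t, y i t⟫ := by
      rw [stepA]
      have : ∀ i, ⟪v i t, y i t⟫ = ⟪c i, v i t⟫ + ∑ j, J i j * ⟪v i t, x j t⟫ := by
        intro i
        rw [hy]
        simp only [inner_add_right, inner_sum, real_inner_smul_right]
        rw [real_inner_comm (v i t) (c i)]
      simp only [this]
      rw [Finset.sum_add_distrib]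
      ring
    rw [stepB]
    -- Step D: the Ω contribution vanishes
    have hΩterm : ∀ (u : EuclideanSpace ℝ (Fin N)) i, ⟪Matrix.toEuclideanLin Ω u, c i⟫ = 0 := by
      intro u i
      rw [euc_adj, hΩ]
      simp [hΩc i]
    have stepD : ∑ i, ⟪Matrix.toEuclideanLin Ω (x i t), y i t⟫ = 0 := by
      have expand : ∑ i, ⟪Matrix.toEuclideanLin Ω (x i t), y i t⟫
          = ∑ i, ∑ j, J i j * ⟪Matrix.toEuclideanLin Ω (x i t), x j t⟫ := by
        refine Finset.sum_congr rfl fun i _ => ?_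
        rw [hy]
        simp only [inner_add_right, inner_sum, real_inner_smul_right, hΩterm, zero_add]
      rw [expand]
      have skew : ∀ i j, ⟪Matrix.toEuclideanLin Ω (x i t), x j t⟫
          = -⟪Matrix.toEuclideanLin Ω (x j t), x i t⟫ := by
        intro i j
        rw [euc_adj, hΩ]
        simp only [map_neg, LinearMap.neg_apply, inner_neg_right]
        rw [real_inner_comm]
      have : (∑ i, ∑ j, J i j * ⟪Matrix.toEuclideanLin Ω (x i t), x j t⟫)
          = -∑ i, ∑ j, J i j * ⟪Matrix.toEuclideanLin Ω (x i t), x j t⟫ := by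
        conv_lhs => rw [Finset.sum_comm]
        rw [← Finset.sum_neg_distrib]
        refine Finset.sum_congr rfl fun i _ => ?_
        rw [← Finset.sum_neg_distrib]
        refine Finset.sum_congr rfl fun j _ => ?_
        rw [hJ j i, skew j i]; ring
      linarith
    -- Step C + E: remaining terms are nonneg
    have stepE : ∀ i, (0:ℝ) ≤ ⟪y i t, y i t⟫ - ⟪y i t, x i t⟫ * ⟪x i t, y i t⟫ := by
      intro i
      have h1 := real_inner_mul_inner_self_le (y i t) (x i t)
      have h2 : ⟪x i t, x i t⟫ = (1:ℝ) := by
        rw [real_inner_self_eq_norm_sq, hnorm i t]; norm_num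
      have h3 : ⟪x i t, y i t⟫ = ⟪y i t, x i t⟫ := real_inner_comm _ _
      rw [h3]
      rw [h2, mul_one] at h1
      linarith
    have expandV : ∀ i, ⟪v i t, y i t⟫ = ⟪Matrix.toEuclideanLin Ω (x i t), y i t⟫
        + (⟪y i t, y i t⟫ - ⟪y i t, x i t⟫ * ⟪x i t, y i t⟫) := by
      intro i
      rw [hv]
      simp only [inner_add_left, inner_sub_left, real_inner_smul_left]
    simp only [Pi.zero_apply, expandV, Finset.sum_add_distrib, stepD, zero_add]
    exact neg_nonpos.mpr (Finset.sum_nonneg fun i _ => stepE i)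
end

section
/- Under the assumptions of Proposition 1 (block matrix J symmetric, block matrix Ω block-diagonal and antisymmetric, Ω_i c_i = 0 for all i), the time derivative of the energy E(x) = -(1/2) xᵀ J x - cᵀ x along trajectories of ẋ = Ωx + P(c + Jx), where P is the block-diagonal orthogonal projector with blocks I - x_i x_iᵀ, equals -(1/2) xᵀ [J,Ω] x - yᵀ P y with y = c + Jx. In particular dE/dt ≤ 0 whenever the commutator [J,Ω] = JΩ - ΩJ is positive semi-definite. -/
open Matrix

lemma aux_dot {ι : Type*} [Fintype ι] (u : ι → ℝ) {x : ℝ → ι → ℝ} {v : ι → ℝ} {t : ℝ}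
    (hx : HasDerivAt x v t) : HasDerivAt (fun s => u ⬝ᵥ x s) (u ⬝ᵥ v) t := by
  simp only [dotProduct]
  exact HasDerivAt.fun_sum fun k _ => ((hasDerivAt_pi.1 hx) k).const_mul (u k)

lemma aux_quad {ι : Type*} [Fintype ι] (A : Matrix ι ι ℝ) {x : ℝ → ι → ℝ} {v : ι → ℝ} {t : ℝ}
    (hx : HasDerivAt x v t) :
    HasDerivAt (fun s => x s ⬝ᵥ A.mulVec (x s)) (v ⬝ᵥ A.mulVec (x t) + x t ⬝ᵥ A.mulVec v) t := by
  have h : ∀ k, HasDerivAt (fun s => x s k * ∑ l, A k l * x s l)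
      (v k * ∑ l, A k l * x t l + x t k * ∑ l, A k l * v l) t := by
    intro k
    exact ((hasDerivAt_pi.1 hx) k).mul
      (HasDerivAt.fun_sum fun l _ => ((hasDerivAt_pi.1 hx) l).const_mul (A k l))
  have := HasDerivAt.fun_sum (fun k (_ : k ∈ Finset.univ) => h k)
  simpa [dotProduct, mulVec, Finset.sum_add_distrib] using this

lemma aux_symm {ι : Type*} [Fintype ι] {A : Matrix ι ι ℝ} (hA : Aᵀ = A) (u w : ι → ℝ) :
    u ⬝ᵥ A.mulVec w = w ⬝ᵥ A.mulVec u := by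
  rw [dotProduct_mulVec, ← mulVec_transpose, hA, dotProduct_comm]

lemma aux_proj {C N : ℕ} (xx : Fin C × Fin N → ℝ)
    (P : Matrix (Fin C × Fin N) (Fin C × Fin N) ℝ)
    (hP : ∀ (i j : Fin C) (a b : Fin N),
      P (i, a) (j, b) =
        if i = j then (if a = b then (1 : ℝ) else 0) - xx (i, a) * xx (j, b) else 0)
    (y : Fin C × Fin N → ℝ) :
    y ⬝ᵥ P.mulVec y =
      ∑ i : Fin C, ((∑ a, y (i, a) * y (i, a)) - (∑ a, xx (i, a) * y (i, a)) ^ 2) := by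
  simp only [dotProduct, mulVec, Fintype.sum_prod_type]
  refine Finset.sum_congr rfl fun i _ => ?_
  have hin : ∀ a : Fin N, (∑ j : Fin C, ∑ b : Fin N, P (i, a) (j, b) * y (j, b))
      = y (i, a) - xx (i, a) * ∑ b, xx (i, b) * y (i, b) := by
    intro a
    rw [Finset.sum_eq_single i (fun j _ hj => by simp [hP, (Ne.symm hj)]) (by simp)]
    simp only [hP, if_pos rfl, sub_mul, ite_mul, one_mul, zero_mul,
      Finset.sum_sub_distrib, Finset.sum_ite_eq, Finset.mem_univ, if_true, Finset.mul_sum]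
    congr 1
    exact Finset.sum_congr rfl fun b _ => by ring
  simp only [hin]
  simp only [mul_sub, Finset.sum_sub_distrib]
  congr 1
  rw [sq, Finset.sum_mul]
  refine Finset.sum_congr rfl fun a _ => ?_
  simp only [Finset.mul_sum, mul_assoc]
  exact Finset.sum_congr rfl fun b _ => by ring

/-- Under the assumptions of Proposition 1 (block matrix `J` symmetric, block matrix `Ω`
block-diagonal and antisymmetric, `Ω c = 0`), the time derivative of the energy
`E(x) = -(1/2) xᵀ J x - cᵀ x` along trajectories of `ẋ = Ωx + P(c + Jx)` equals
`-(1/2) xᵀ [J,Ω] x - yᵀ P y` with `y = c + Jx`; in particular `E` is non-increasing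
whenever `[J,Ω]` is positive semi-definite. -/
theorem stmt7 {C N : ℕ}
    (J Ω : Matrix (Fin C × Fin N) (Fin C × Fin N) ℝ)
    (hJ : Jᵀ = J) (hΩ : Ωᵀ = -Ω)
    (hΩblock : ∀ (i j : Fin C) (a b : Fin N), i ≠ j → Ω (i, a) (j, b) = 0)
    (c : Fin C × Fin N → ℝ) (hΩc : Ω.mulVec c = 0)
    (x : ℝ → (Fin C × Fin N → ℝ))
    (hunit : ∀ (t : ℝ) (i : Fin C), ∑ a, x t (i, a) * x t (i, a) = 1)
    (P : ℝ → Matrix (Fin C × Fin N) (Fin C × Fin N) ℝ)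
    (hP : ∀ (t : ℝ) (i j : Fin C) (a b : Fin N),
      P t (i, a) (j, b) =
        if i = j then (if a = b then (1 : ℝ) else 0) - x t (i, a) * x t (j, b) else 0)
    (hode : ∀ t : ℝ, HasDerivAt x
      (Ω.mulVec (x t) + (P t).mulVec (c + J.mulVec (x t))) t) :
    (∀ t : ℝ, HasDerivAt (fun s => -(1 / 2) * (x s ⬝ᵥ J.mulVec (x s)) - c ⬝ᵥ x s)
      (-(1 / 2) * (x t ⬝ᵥ (J * Ω - Ω * J).mulVec (x t)) -
        (c + J.mulVec (x t)) ⬝ᵥ (P t).mulVec (c + J.mulVec (x t))) t) ∧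
    ((J * Ω - Ω * J).PosSemidef →
      Antitone fun t : ℝ => -(1 / 2) * (x t ⬝ᵥ J.mulVec (x t)) - c ⬝ᵥ x t) := by
  have key : ∀ t : ℝ, HasDerivAt (fun s => -(1 / 2) * (x s ⬝ᵥ J.mulVec (x s)) - c ⬝ᵥ x s)
      (-(1 / 2) * (x t ⬝ᵥ (J * Ω - Ω * J).mulVec (x t)) -
        (c + J.mulVec (x t)) ⬝ᵥ (P t).mulVec (c + J.mulVec (x t))) t := by
    intro t
    set y : Fin C × Fin N → ℝ := c + J.mulVec (x t) with hy
    set v : Fin C × Fin N → ℝ := Ω.mulVec (x t) + (P t).mulVec y with hv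
    have hd : HasDerivAt (fun s => -(1 / 2) * (x s ⬝ᵥ J.mulVec (x s)) - c ⬝ᵥ x s)
        (-(1 / 2) * (v ⬝ᵥ J.mulVec (x t) + x t ⬝ᵥ J.mulVec v) - c ⬝ᵥ v) t :=
      ((aux_quad J (hode t)).const_mul (-(1 / 2))).sub (aux_dot c (hode t))
    convert hd using 1
    have h1 : x t ⬝ᵥ J.mulVec v = v ⬝ᵥ J.mulVec (x t) := aux_symm hJ _ _
    have hΩc' : Ω.mulVec (x t) ⬝ᵥ c = 0 := by
      rw [dotProduct_comm, dotProduct_mulVec, ← mulVec_transpose, hΩ, neg_mulVec, hΩc]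
      simp
    have h2 : x t ⬝ᵥ (J * Ω).mulVec (x t) = Ω.mulVec (x t) ⬝ᵥ J.mulVec (x t) := by
      rw [← mulVec_mulVec, aux_symm hJ]
    have h3 : x t ⬝ᵥ (Ω * J).mulVec (x t) = -(Ω.mulVec (x t) ⬝ᵥ J.mulVec (x t)) := by
      rw [← mulVec_mulVec, dotProduct_mulVec, ← mulVec_transpose, hΩ, neg_mulVec,
        neg_dotProduct]
    have hquad : x t ⬝ᵥ (J * Ω - Ω * J).mulVec (x t)
        = 2 * (Ω.mulVec (x t) ⬝ᵥ J.mulVec (x t)) := by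
      rw [sub_mulVec, dotProduct_sub, h2, h3]; ring
    have hexp : v ⬝ᵥ J.mulVec (x t) + x t ⬝ᵥ J.mulVec v
        = 2 * (Ω.mulVec (x t) ⬝ᵥ J.mulVec (x t)) + 2 * ((P t).mulVec y ⬝ᵥ J.mulVec (x t)) := by
      rw [h1, hv, add_dotProduct]; ring
    have hc : c ⬝ᵥ v = (P t).mulVec y ⬝ᵥ c := by
      rw [hv, dotProduct_add, dotProduct_comm c, hΩc', dotProduct_comm c, zero_add]
    have hyP : y ⬝ᵥ (P t).mulVec y
        = (P t).mulVec y ⬝ᵥ c + (P t).mulVec y ⬝ᵥ J.mulVec (x t) := by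
      rw [dotProduct_comm, hy, dotProduct_add]
    rw [hquad, hexp, hc, hyP]; ring
  refine ⟨key, fun hpsd => ?_⟩
  refine antitone_of_hasDerivAt_nonpos (f' := fun t =>
      -(1 / 2) * (x t ⬝ᵥ (J * Ω - Ω * J).mulVec (x t)) -
        (c + J.mulVec (x t)) ⬝ᵥ (P t).mulVec (c + J.mulVec (x t))) key ?_
  intro t
  have h1 : 0 ≤ x t ⬝ᵥ (J * Ω - Ω * J).mulVec (x t) := by
    have := hpsd.dotProduct_mulVec_nonneg (x t)
    simpa using this
  have h2 : 0 ≤ (c + J.mulVec (x t)) ⬝ᵥ (P t).mulVec (c + J.mulVec (x t)) := by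
    rw [aux_proj (x t) (P t) (hP t) (c + J.mulVec (x t))]
    refine Finset.sum_nonneg fun i _ => sub_nonneg.2 ?_
    calc (∑ a, x t (i, a) * (c + J.mulVec (x t)) (i, a)) ^ 2
        ≤ (∑ a, x t (i, a) ^ 2) * ∑ a, (c + J.mulVec (x t)) (i, a) ^ 2 :=
          Finset.sum_mul_sq_le_sq_mul_sq _ _ _
      _ = ∑ a, (c + J.mulVec (x t)) (i, a) * (c + J.mulVec (x t)) (i, a) := by
          have h := hunit t i
          simp only [← sq] at h
          rw [h, one_mul]
          exact Finset.sum_congr rfl fun a _ => (sq _)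
  simp only [Pi.le_def, Pi.zero_apply]
  nlinarith
end
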